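/- If x and y are bounded sequences and there exists an injective map π : ℕ → ℕ with xₙ = y_{π(n)} for all n, then x*ₙ ≤ y*ₙ for all n. -/
import Mathlib


open scoped Classical

/-- A Banach sequence space: a subspace of `ℕ → ℝ` with a complete monotone norm
such that the canonical unit vectors have norm one. -/
structure BanachSeqSpace where
  X : Submodule ℝ (ℕ → ℝ)
  N : (ℕ → ℝ) → ℝ
  N_nonneg : ∀ x ∈ X, 0 ≤ N x
  N_eq_zero : ∀ x ∈ X, N x = 0 → x = 0
  N_add : ∀ x ∈ X, ∀ y ∈ X, N (x + y) ≤ N x + N y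
  N_smul : ∀ (c : ℝ), ∀ x ∈ X, N (c • x) = |c| * N x
  complete : ∀ f : ℕ → ℕ → ℝ, (∀ k, f k ∈ X) →
    (∀ ε : ℝ, 0 < ε → ∃ K, ∀ m ≥ K, ∀ n ≥ K, N (f m - f n) < ε) →
    ∃ x ∈ X, ∀ ε : ℝ, 0 < ε → ∃ K, ∀ k ≥ K, N (f k - x) < ε
  mono_mem : ∀ (x : ℕ → ℝ), ∀ y ∈ X, (∀ n, |x n| ≤ |y n|) → x ∈ X
  mono_norm : ∀ (x : ℕ → ℝ), ∀ y ∈ X, (∀ n, |x n| ≤ |y n|) → N x ≤ N y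
  unit_mem : ∀ k : ℕ, (fun n => if n = k then (1 : ℝ) else 0) ∈ X
  unit_norm : ∀ k : ℕ, N (fun n => if n = k then (1 : ℝ) else 0) = 1

/-- A Banach sequence space is symmetric if it is stable under permutations of the
coordinates, with equal norm. -/
def IsSymmetric (S : BanachSeqSpace) : Prop :=
  ∀ x ∈ S.X, ∀ σ : Equiv.Perm ℕ, (x ∘ σ) ∈ S.X ∧ S.N (x ∘ σ) = S.N x

/-- The decreasing rearrangement of a (bounded) sequence, indexed from 0:
`dstar x n` is the paper's `x*_(n+1) = inf { sup_{k ∉ J} |x k| : |J| ≤ n }`. -/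
noncomputable def dstar (x : ℕ → ℝ) (n : ℕ) : ℝ :=
  sInf {a : ℝ | ∃ J : Finset ℕ, J.card ≤ n ∧ a = sSup {b : ℝ | ∃ k, k ∉ J ∧ b = |x k|}}

/-- The closing up of a sequence: its nonzero terms in order, padded with zeros. -/
noncomputable def closingUp (x : ℕ → ℝ) (n : ℕ) : ℝ :=
  if {k | x k ≠ 0}.Infinite ∨ n < {k | x k ≠ 0}.ncard
  then x (Nat.nth (fun k => x k ≠ 0) n) else 0

/-- If `x` is obtained from `y` by an injective map (`xₙ = y_{π n}`), then
`x*ₙ ≤ y*ₙ` for all `n`. -/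
theorem dstar_comp_injective (x y : ℕ → ℝ)
    (hx : ∃ C, ∀ n, |x n| ≤ C) (hy : ∃ C, ∀ n, |y n| ≤ C)
    (π : ℕ → ℕ) (hπ : Function.Injective π) (h : ∀ n, x n = y (π n)) :
    ∀ n, dstar x n ≤ dstar y n := by
  obtain ⟨Cx, hCx⟩ := hx
  obtain ⟨Cy, hCy⟩ := hy
  intro n
  unfold dstar
  have bddx : ∀ J : Finset ℕ, BddAbove {b : ℝ | ∃ k, k ∉ J ∧ b = |x k|} := by
    rintro J; exact ⟨Cx, by rintro b ⟨k, _, rfl⟩; exact hCx k⟩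
  have bddy : ∀ J : Finset ℕ, BddAbove {b : ℝ | ∃ k, k ∉ J ∧ b = |y k|} := by
    rintro J; exact ⟨Cy, by rintro b ⟨k, _, rfl⟩; exact hCy k⟩
  have nex : ∀ J : Finset ℕ, {b : ℝ | ∃ k, k ∉ J ∧ b = |x k|}.Nonempty := by
    intro J
    obtain ⟨k, hk⟩ := Infinite.exists_notMem_finset J
    exact ⟨|x k|, k, hk, rfl⟩
  have bdd0 : BddBelow {a : ℝ | ∃ J : Finset ℕ, J.card ≤ n ∧
      a = sSup {b : ℝ | ∃ k, k ∉ J ∧ b = |x k|}} := by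
    refine ⟨0, ?_⟩
    rintro a ⟨J, hJ, rfl⟩
    obtain ⟨b, k, hk, rfl⟩ := nex J
    exact le_trans (abs_nonneg _) (le_csSup (bddx J) ⟨k, hk, rfl⟩)
  apply le_csInf
  · exact ⟨_, ∅, by simp, rfl⟩
  · rintro a ⟨J, hJ, rfl⟩
    set J' := J.preimage π (Set.injOn_of_injective hπ) with hJ'def
    have hcard : J'.card ≤ n := by
      refine le_trans ?_ hJ
      apply Finset.card_le_card_of_injOn π
      · intro k hk; simpa [hJ'def, Finset.mem_preimage] using hk
      · exact Set.injOn_of_injective hπ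
    calc sInf {a : ℝ | ∃ J : Finset ℕ, J.card ≤ n ∧
          a = sSup {b : ℝ | ∃ k, k ∉ J ∧ b = |x k|}}
        ≤ sSup {b : ℝ | ∃ k, k ∉ J' ∧ b = |x k|} := csInf_le bdd0 ⟨J', hcard, rfl⟩
      _ ≤ sSup {b : ℝ | ∃ k, k ∉ J ∧ b = |y k|} := by
          apply csSup_le_csSup (bddy J) (nex J')
          rintro b ⟨k, hk, rfl⟩
          exact ⟨π k, fun hm => hk (Finset.mem_preimage.mpr hm), by rw [h k]⟩
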